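/- For every η ∈ (0,1), the power series defining the Mainardi function, K_η(z) = Σ_{m=0}^∞ (-1)^m z^m / (m! · Γ(-ηm + 1 - η)), converges for every complex number z; that is, the series has infinite radius of convergence, so K_η is an entire function. -/

import Mathlib

open Filter Real

set_option maxHeartbeats 1000000

/-- For every `η ∈ (0,1)`, the power series defining the Mainardi function
`K_η(z) = ∑_{m=0}^∞ (-1)^m z^m / (m! · Γ(-ηm + 1 - η))` converges for every
complex number `z` (so it has infinite radius of convergence and `K_η` is entire).
Note that Mathlib's `Complex.Gamma` vanishes at the nonpositive integers, so division
by it implements the entire reciprocal Gamma function. -/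
theorem mainardi_series_summable (η : ℝ) (hη0 : 0 < η) (hη1 : η < 1) (z : ℂ) :
    Summable (fun m : ℕ =>
      (-1 : ℂ) ^ m * z ^ m /
        ((Nat.factorial m : ℂ) * Complex.Gamma (-(η : ℂ) * (m : ℂ) + 1 - (η : ℂ)))) := by
  set c : ℝ := 2 * (‖z‖ + 1) with hc
  have hc1 : (1 : ℝ) ≤ c := by have := norm_nonneg z; rw [hc]; linarith
  set k : ℕ := ⌈2 / (1 - η)⌉₊ with hk
  have hk2 : (2 : ℝ) ≤ (k : ℝ) * (1 - η) := by
    have h1 : 2 / (1 - η) ≤ (k : ℝ) := Nat.le_ceil _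
    have h2 : (0 : ℝ) < 1 - η := by linarith
    rw [div_le_iff₀ h2] at h1
    linarith
  -- eventual hypotheses
  have E1 : ∀ᶠ m : ℕ in atTop, (2 : ℝ) ≤ η * ((m : ℝ) + 1) := by
    have : Tendsto (fun m : ℕ => η * ((m : ℝ) + 1)) atTop atTop := by
      apply Tendsto.const_mul_atTop hη0
      exact tendsto_atTop_add_const_right _ 1 tendsto_natCast_atTop_atTop
    exact this.eventually_ge_atTop 2
  have E2 : ∀ᶠ m : ℕ in atTop, η * ((m : ℝ) + 1) + 1 ≤ (m : ℝ) := by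
    have : Tendsto (fun m : ℕ => (1 - η) * (m : ℝ) - (η + 1)) atTop atTop := by
      apply tendsto_atTop_add_const_right
      exact Tendsto.const_mul_atTop (by linarith) tendsto_natCast_atTop_atTop
    filter_upwards [this.eventually_ge_atTop 0] with m hm
    nlinarith
  have E3 : ∀ᶠ m : ℕ in atTop, c ^ k ≤ η * (m : ℝ) := by
    have : Tendsto (fun m : ℕ => η * (m : ℝ)) atTop atTop :=
      Tendsto.const_mul_atTop hη0 tendsto_natCast_atTop_atTop
    exact this.eventually_ge_atTop _
  have E4 : ∀ᶠ m : ℕ in atTop, 2 * k ≤ m := eventually_ge_atTop (2 * k)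
  apply Summable.of_norm_bounded_eventually_nat (g := fun m => (1 / 2 : ℝ) ^ m)
    (summable_geometric_of_lt_one (by norm_num) (by norm_num))
  filter_upwards [E1, E2, E3, E4] with m h1 h2 h3 h4
  -- rewrite the Gamma argument as a real number
  have hξ : (-(η : ℂ) * (m : ℂ) + 1 - (η : ℂ)) = ((1 - η * ((m : ℝ) + 1) : ℝ) : ℂ) := by
    push_cast; ring
  rw [hξ, Complex.Gamma_ofReal]
  set γ : ℝ := Real.Gamma (1 - η * ((m : ℝ) + 1)) with hγdef
  have hnorm : ‖(-1 : ℂ) ^ m * z ^ m / ((Nat.factorial m : ℂ) * (γ : ℂ))‖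
      = ‖z‖ ^ m / ((Nat.factorial m : ℝ) * |γ|) := by
    simp [norm_div, norm_mul, norm_pow, Complex.norm_real, Real.norm_eq_abs]
  rw [hnorm]
  have hfacpos : (0 : ℝ) < (Nat.factorial m : ℝ) := by positivity
  rcases eq_or_ne γ 0 with hγ | hγ
  · rw [hγ]; simp only [abs_zero, mul_zero, div_zero]; positivity
  -- reflection formula bound: 1 ≤ G * |γ| where G = Γ(η(m+1))
  set G : ℝ := Real.Gamma (η * ((m : ℝ) + 1)) with hGdef
  have hxpos : (0 : ℝ) < η * ((m : ℝ) + 1) := by positivity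
  have hGpos : 0 < G := Real.Gamma_pos_of_pos hxpos
  have hrefl := Real.Gamma_mul_Gamma_one_sub (1 - η * ((m : ℝ) + 1))
  have harg : (1 : ℝ) - (1 - η * ((m : ℝ) + 1)) = η * ((m : ℝ) + 1) := by ring
  rw [harg] at hrefl
  -- hrefl : γ * G = π / sin (π * (1 - η(m+1)))
  set s : ℝ := Real.sin (π * (1 - η * ((m : ℝ) + 1))) with hs
  have hsne : s ≠ 0 := by
    intro h0
    rw [h0, div_zero] at hrefl
    exact hγ (by nlinarith [hrefl])
  have h1G : 1 ≤ G * |γ| := by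
    have habs : |γ| * G = π / |s| := by
      have : |γ * G| = |π / s| := by rw [hrefl]
      rwa [abs_mul, abs_div, abs_of_pos Real.pi_pos, abs_of_pos hGpos] at this
    have hsle : |s| ≤ 1 := Real.abs_sin_le_one _
    have hspos : 0 < |s| := abs_pos.2 hsne
    have : π ≤ π / |s| := by
      rw [le_div_iff₀ hspos]
      nlinarith [Real.pi_pos]
    nlinarith [Real.pi_gt_three]
  -- first reduction: bound by ‖z‖^m * G / m!
  have step1 : ‖z‖ ^ m / ((Nat.factorial m : ℝ) * |γ|) ≤ ‖z‖ ^ m * G / (Nat.factorial m : ℝ) := by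
    have hγpos : 0 < |γ| := abs_pos.2 hγ
    rw [div_le_div_iff₀ (by positivity) hfacpos]
    have hzn : (0 : ℝ) ≤ ‖z‖ ^ m := by positivity
    nlinarith [mul_nonneg hzn hfacpos.le]
  refine step1.trans ?_
  -- Gamma monotone bound: G ≤ N !
  set N : ℕ := ⌈η * ((m : ℝ) + 1)⌉₊ with hN
  have hxleN : η * ((m : ℝ) + 1) ≤ (N : ℝ) := Nat.le_ceil _
  have hGleN : G ≤ (Nat.factorial N : ℝ) := by
    have hmono := Real.Gamma_strictMonoOn_Ici.monotoneOn
    have h2N : (2 : ℝ) ≤ (N : ℝ) + 1 := by linarith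
    have := hmono (Set.mem_Ici.2 h1) (Set.mem_Ici.2 h2N) (by linarith)
    rwa [Real.Gamma_nat_eq_factorial] at this
  have hNlem : N ≤ m := by
    rw [hN, Nat.ceil_le]
    linarith
  -- factorial lower bound: N! * (N+1)^(m-N) ≤ m!
  have hfac : (Nat.factorial N : ℝ) * ((N : ℝ) + 1) ^ (m - N) ≤ (Nat.factorial m : ℝ) := by
    have := Nat.factorial_mul_pow_le_factorial (m := N) (n := m - N)
    rw [Nat.add_sub_cancel' hNlem] at this
    exact_mod_cast this
  -- power bounds
  have hckN : c ^ k ≤ (N : ℝ) + 1 := by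
    have h' : η * (m : ℝ) ≤ η * ((m : ℝ) + 1) :=
      mul_le_mul_of_nonneg_left (by linarith) hη0.le
    linarith
  have hNltx : (N : ℝ) < η * ((m : ℝ) + 1) + 1 := Nat.ceil_lt_add_one hxpos.le
  have hkmN : m ≤ k * (m - N) := by
    have hcast : ((m - N : ℕ) : ℝ) = (m : ℝ) - (N : ℝ) := by
      rw [Nat.cast_sub hNlem]
    have hm2k : (2 * k : ℝ) ≤ (m : ℝ) := by exact_mod_cast h4
    have hkpos : (0 : ℝ) ≤ (k : ℝ) := Nat.cast_nonneg k
    have t1 : (k : ℝ) * (N : ℝ) ≤ (k : ℝ) * (η * ((m : ℝ) + 1) + 1) :=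
      mul_le_mul_of_nonneg_left hNltx.le hkpos
    have t2 : 2 * (m : ℝ) ≤ ((k : ℝ) * (1 - η)) * (m : ℝ) :=
      mul_le_mul_of_nonneg_right hk2 (Nat.cast_nonneg m)
    have t3 : (k : ℝ) * η ≤ (k : ℝ) * 1 := mul_le_mul_of_nonneg_left hη1.le hkpos
    have : (m : ℝ) ≤ (k : ℝ) * ((m : ℝ) - (N : ℝ)) := by nlinarith
    have : (m : ℝ) ≤ ((k * (m - N) : ℕ) : ℝ) := by
      push_cast [Nat.cast_sub hNlem]; linarith
    exact_mod_cast this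
  have hcm : c ^ m ≤ ((N : ℝ) + 1) ^ (m - N) := by
    calc c ^ m ≤ c ^ (k * (m - N)) := pow_le_pow_right₀ hc1 hkmN
      _ = (c ^ k) ^ (m - N) := by rw [pow_mul]
      _ ≤ ((N : ℝ) + 1) ^ (m - N) := by
          apply pow_le_pow_left₀ (by positivity) hckN
  have h2z : (2 : ℝ) ^ m * ‖z‖ ^ m ≤ c ^ m := by
    rw [← mul_pow]
    apply pow_le_pow_left₀ (by positivity)
    have := norm_nonneg z
    nlinarith
  -- finish
  rw [div_le_iff₀ hfacpos]
  calc ‖z‖ ^ m * G ≤ ‖z‖ ^ m * (Nat.factorial N : ℝ) := by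
        apply mul_le_mul_of_nonneg_left hGleN (by positivity)
    _ = (1 / 2 : ℝ) ^ m * ((Nat.factorial N : ℝ) * (2 ^ m * ‖z‖ ^ m)) := by
        have h : ((1 : ℝ) / 2) ^ m * 2 ^ m = 1 := by
          rw [← mul_pow]; norm_num
        linear_combination (-((Nat.factorial N : ℝ) * ‖z‖ ^ m)) * h
    _ ≤ (1 / 2 : ℝ) ^ m * ((Nat.factorial N : ℝ) * c ^ m) := by
        apply mul_le_mul_of_nonneg_left _ (by positivity)
        exact mul_le_mul_of_nonneg_left h2z (by positivity)
    _ ≤ (1 / 2 : ℝ) ^ m * (Nat.factorial N : ℝ) * ((N : ℝ) + 1) ^ (m - N) := by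
        rw [mul_assoc]
        exact mul_le_mul_of_nonneg_left (mul_le_mul_of_nonneg_left hcm (by positivity)) (by positivity)
    _ = (1 / 2 : ℝ) ^ m * ((Nat.factorial N : ℝ) * ((N : ℝ) + 1) ^ (m - N)) := by ring
    _ ≤ (1 / 2 : ℝ) ^ m * (Nat.factorial m : ℝ) := by
        exact mul_le_mul_of_nonneg_left hfac (by positivity)
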